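/- Let E be a finite-dimensional real normed vector space, let Y ⊆ E, and let v ∈ E be such that the tangent cone of Y at 0 is contained in the half-line {s • v : s ∈ ℝ, s ≥ 0}. Then for every ε > 0 there exists δ > 0 such that for all a, b ∈ Y with ‖a‖ = ‖b‖ and ‖a‖ ≤ δ one has ‖a − b‖ ≤ ε·‖a‖. (That is, if the tangent cone of Y at the origin is a single real half-line, then the diameter of the t-link of Y tends to 0 faster than linearly as t → 0; this is the key estimate in the proof that a metrically conic germ admits no choking horn.) -/

import Mathlib

/-- If the tangent cone at `0` of a subset `Y` of a finite-dimensional real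
normed space is contained in a half-line `{s • v : s ≥ 0}`, then the diameter of the
`t`-link of `Y` tends to `0` faster than linearly as `t → 0`. -/
theorem stmt_3 (E : Type*) [NormedAddCommGroup E] [NormedSpace ℝ E] [FiniteDimensional ℝ E]
    (Y : Set E) (v : E)
    (hT : tangentConeAt ℝ Y 0 ⊆ {w : E | ∃ s : ℝ, 0 ≤ s ∧ w = s • v}) :
    ∀ ε > 0, ∃ δ > 0, ∀ a ∈ Y, ∀ b ∈ Y, ‖a‖ = ‖b‖ → ‖a‖ ≤ δ → ‖a - b‖ ≤ ε * ‖a‖ := by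
  intro ε hε
  by_contra hcon
  push_neg at hcon
  choose a ha b hb hab hle hgt using fun n : ℕ =>
    hcon (1 / ((n : ℝ) + 1)) (by positivity)
  have hpos : ∀ n, 0 < ‖a n‖ := by
    intro n
    rcases (norm_nonneg (a n)).lt_or_eq with h' | h'
    · exact h'
    · exfalso
      have ha0 : a n = 0 := by rwa [eq_comm, norm_eq_zero] at h'
      have hb0 : b n = 0 := by rw [← norm_eq_zero, ← hab n, ← h']
      have := hgt n
      rw [ha0, hb0] at this
      simp at this
  set f : ℕ → E × E := fun n => (‖a n‖⁻¹ • a n, ‖a n‖⁻¹ • b n) with hf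
  have hfm : ∀ n, f n ∈ Metric.sphere (0 : E) 1 ×ˢ Metric.sphere (0 : E) 1 := by
    intro n
    constructor
    · simp only [hf, mem_sphere_zero_iff_norm, norm_smul, norm_inv, norm_norm]
      exact inv_mul_cancel₀ (hpos n).ne'
    · simp only [hf, mem_sphere_zero_iff_norm, norm_smul, norm_inv, norm_norm, hab n]
      exact inv_mul_cancel₀ (by rw [← hab n]; exact (hpos n).ne')
  obtain ⟨⟨p, q⟩, hpq_mem, φ, hφ, hlim⟩ :=
    ((isCompact_sphere (0 : E) 1).prod (isCompact_sphere (0 : E) 1)).tendsto_subseq hfm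
  have hlimp : Filter.Tendsto (fun n => ‖a (φ n)‖⁻¹ • a (φ n)) Filter.atTop (nhds p) :=
    (continuous_fst.tendsto _).comp hlim
  have hlimq : Filter.Tendsto (fun n => ‖a (φ n)‖⁻¹ • b (φ n)) Filter.atTop (nhds q) :=
    (continuous_snd.tendsto _).comp hlim
  have hnormtend : Filter.Tendsto (fun n => ‖(‖a (φ n)‖⁻¹ : ℝ)‖) Filter.atTop Filter.atTop := by
    have hmono : ∀ n : ℕ, ((n : ℝ) + 1) ≤ ‖(‖a (φ n)‖⁻¹ : ℝ)‖ := by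
      intro n
      have h1 : ‖a (φ n)‖ ≤ 1 / ((φ n : ℝ) + 1) := hle (φ n)
      have h2 : ((n : ℝ) + 1) ≤ ((φ n : ℝ) + 1) := by
        have h := hφ.le_apply (x := n)
        have : (n : ℝ) ≤ (φ n : ℝ) := Nat.cast_le.mpr h
        linarith
      have h3 : ((φ n : ℝ) + 1) ≤ ‖a (φ n)‖⁻¹ := by
        rw [show ((φ n : ℝ) + 1) = (1 / ((φ n : ℝ) + 1))⁻¹ by rw [one_div, inv_inv]]
        gcongr
        exact hpos _
      rw [Real.norm_of_nonneg (by positivity)]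
      linarith
    exact Filter.tendsto_atTop_mono hmono
      (Filter.tendsto_atTop_add_const_right _ 1 tendsto_natCast_atTop_atTop)
  have hp : p ∈ tangentConeAt ℝ Y 0 := by
    refine mem_tangentConeAt_of_seq Filter.atTop (fun n => ‖a (φ n)‖⁻¹) (fun n => a (φ n)) (tangentConeAt.lim_zero Filter.atTop hnormtend hlimp) ?_ hlimp
    filter_upwards with n
    simpa using ha (φ n)
  have hq : q ∈ tangentConeAt ℝ Y 0 := by
    refine mem_tangentConeAt_of_seq Filter.atTop (fun n => ‖a (φ n)‖⁻¹) (fun n => b (φ n)) (tangentConeAt.lim_zero Filter.atTop hnormtend hlimq) ?_ hlimq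
    filter_upwards with n
    simpa using hb (φ n)
  obtain ⟨s, hs, hps⟩ := hT hp
  obtain ⟨t, ht, hqt⟩ := hT hq
  have hpnorm : ‖p‖ = 1 := mem_sphere_zero_iff_norm.mp hpq_mem.1
  have hqnorm : ‖q‖ = 1 := mem_sphere_zero_iff_norm.mp hpq_mem.2
  have h1 : s * ‖v‖ = 1 := by
    rw [← hpnorm, hps, norm_smul, Real.norm_of_nonneg hs]
  have h2 : t * ‖v‖ = 1 := by
    rw [← hqnorm, hqt, norm_smul, Real.norm_of_nonneg ht]
  have hvne : ‖v‖ ≠ 0 := by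
    intro h0
    rw [h0, mul_zero] at h1
    exact one_ne_zero h1.symm
  have hst : s = t := by
    have := h1.trans h2.symm
    exact mul_right_cancel₀ hvne this
  have hpq : p = q := by rw [hps, hqt, hst]
  have hεle : ε ≤ ‖p - q‖ := by
    apply ge_of_tendsto ((hlimp.sub hlimq).norm)
    filter_upwards with n
    set k := φ n
    have : ‖‖a k‖⁻¹ • a k - ‖a k‖⁻¹ • b k‖ = ‖a k‖⁻¹ * ‖a k - b k‖ := by
      rw [← smul_sub, norm_smul, Real.norm_of_nonneg (by positivity)]
    rw [this]
    have hgtk := hgt k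
    have hik : 0 < ‖a k‖⁻¹ := inv_pos.mpr (hpos k)
    rw [show ε = ‖a k‖⁻¹ * (ε * ‖a k‖) by rw [mul_comm ε, ← mul_assoc, inv_mul_cancel₀ (hpos k).ne', one_mul]]
    exact le_of_lt (by gcongr)
  rw [hpq, sub_self, norm_zero] at hεle
  linarith
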